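/- Let 0 < p < ∞ and let ν : ℕ → ℂ satisfy ∑_n |ν_n|^p < ∞. Suppose that a : ℕ → ℂ is a sequence such that for every z ∈ ℂ the infinite product ∏_{n=1}^∞ (1 + ν_n z) converges and equals the convergent power series ∑_{n=0}^∞ a_n z^n. Then for every q > p there exists N such that for all n ≥ N one has |a_n| ≤ n^{−n/q}. -/

import Mathlib

open Filter Finset Topology NNReal

lemma aux_log_one_add_le {s : ℝ} (hs0 : 0 < s) (hs1 : s ≤ 1) {x : ℝ} (hx : 0 ≤ x) :
    Real.log (1 + x) ≤ (1/s + Real.log 2) * x ^ s := by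
  have hC : (1:ℝ) ≤ 1/s + Real.log 2 := by
    have h2 : (0:ℝ) ≤ Real.log 2 := Real.log_nonneg (by norm_num)
    have : (1:ℝ) ≤ 1/s := by
      rw [le_div_iff₀ hs0]; linarith
    linarith
  rcases eq_or_lt_of_le hx with h0 | hx0
  · rw [← h0]
    simp only [add_zero, Real.log_one]
    positivity
  rcases le_or_gt x 1 with hx1 | hx1
  · have h1 : Real.log (1 + x) ≤ x := by
      have := Real.log_le_sub_one_of_pos (by linarith : (0:ℝ) < 1 + x)
      linarith
    have h2 : x ≤ x ^ s := by
      calc x = x ^ (1:ℝ) := (Real.rpow_one x).symm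
      _ ≤ x ^ s := Real.rpow_le_rpow_of_exponent_ge hx0 hx1 hs1
    have h3 : x ^ s ≤ (1/s + Real.log 2) * x ^ s := by
      nlinarith [Real.rpow_nonneg hx s]
    linarith
  · have hxs1 : (1:ℝ) ≤ x ^ s := Real.one_le_rpow hx1.le hs0.le
    have h1 : Real.log (1 + x) ≤ Real.log 2 + Real.log x := by
      rw [← Real.log_mul (by norm_num) (by linarith)]
      exact Real.log_le_log (by linarith) (by linarith)
    have h2 : Real.log x ≤ (1/s) * x ^ s := by
      have := Real.log_le_sub_one_of_pos (Real.rpow_pos_of_pos hx0 s)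
      have hlx : Real.log (x ^ s) = s * Real.log x := Real.log_rpow hx0 s
      rw [hlx] at this
      rw [div_mul_eq_mul_div, le_div_iff₀ hs0]
      nlinarith
    have h3 : Real.log 2 ≤ Real.log 2 * x ^ s := by
      nlinarith [Real.log_nonneg (by norm_num : (1:ℝ) ≤ 2)]
    nlinarith

lemma aux_summable_abs_of_bounded_sums {g : ℕ → ℝ} {B : ℝ}
    (h : ∀ G : Finset ℕ, |∑ i ∈ G, g i| ≤ B) : Summable fun i => |g i| := by
  have hpos : Summable fun i => max (g i) 0 := by
    apply summable_of_sum_range_le (c := B) (fun n => le_max_right _ _)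
    intro n
    have : ∑ i ∈ range n, max (g i) 0 = ∑ i ∈ (range n).filter (fun i => 0 ≤ g i), g i := by
      rw [Finset.sum_filter]
      apply Finset.sum_congr rfl
      intro i _
      rcases le_or_gt 0 (g i) with h' | h'
      · simp [h', max_eq_left h']
      · simp [not_le.mpr h', max_eq_right h'.le]
    rw [this]
    exact (le_abs_self _).trans (h _)
  have hneg : Summable fun i => max (-g i) 0 := by
    apply summable_of_sum_range_le (c := B) (fun n => le_max_right _ _)
    intro n
    have : ∑ i ∈ range n, max (-g i) 0 = -∑ i ∈ (range n).filter (fun i => ¬ 0 ≤ g i), g i := by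
      rw [← Finset.sum_neg_distrib, Finset.sum_filter]
      apply Finset.sum_congr rfl
      intro i _
      rcases le_or_gt 0 (g i) with h' | h'
      · simp [h', max_eq_right (neg_nonpos.mpr h')]
      · simp [not_le.mpr h', max_eq_left (neg_nonneg.mpr h'.le)]
    rw [this]
    exact (neg_le_abs _).trans (h _)
  have : (fun i => |g i|) = fun i => max (g i) 0 + max (-g i) 0 := by
    funext i; rcases le_or_gt 0 (g i) with h' | h'
    · rw [abs_of_nonneg h', max_eq_left h', max_eq_right (neg_nonpos.mpr h')]; ring
    · rw [abs_of_neg h', max_eq_right h'.le, max_eq_left (neg_nonneg.mpr h'.le)]; ring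
  rw [this]; exact hpos.add hneg

lemma aux_tail_prod {f : ℕ → ℂ} {P : ℂ} (h : HasProd f P) (hP : P ≠ 0) {ε : ℝ} (hε : 0 < ε) :
    ∃ F₀ : Finset ℕ, ∀ G : Finset ℕ, Disjoint G F₀ → ‖∏ i ∈ G, f i - 1‖ ≤ ε := by
  have hPn : 0 < ‖P‖ := norm_pos_iff.mpr hP
  set δ : ℝ := min (ε * ‖P‖ / 4) (‖P‖ / 2) with hδdef
  have hδ : 0 < δ := lt_min (by positivity) (by positivity)
  have hev : ∀ᶠ F in atTop, ∏ i ∈ F, f i ∈ Metric.closedBall P δ :=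
    h.eventually (Metric.closedBall_mem_nhds P hδ)
  obtain ⟨F₁, hF₁⟩ := eventually_atTop.mp hev
  refine ⟨F₁, fun G hG => ?_⟩
  have hA : dist (∏ i ∈ F₁, f i) P ≤ δ := Metric.mem_closedBall.mp (hF₁ F₁ le_rfl)
  have hAG : dist (∏ i ∈ F₁ ∪ G, f i) P ≤ δ :=
    Metric.mem_closedBall.mp (hF₁ (F₁ ∪ G) Finset.subset_union_left)
  set A := ∏ i ∈ F₁, f i with hAdef
  have hprod : ∏ i ∈ F₁ ∪ G, f i = A * ∏ i ∈ G, f i := Finset.prod_union hG.symm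
  have h2δ : ‖A * ((∏ i ∈ G, f i) - 1)‖ ≤ 2 * δ := by
    have : A * ((∏ i ∈ G, f i) - 1) = (∏ i ∈ F₁ ∪ G, f i - P) - (A - P) := by
      rw [hprod]; ring
    rw [this]
    calc ‖(∏ i ∈ F₁ ∪ G, f i - P) - (A - P)‖ ≤ ‖∏ i ∈ F₁ ∪ G, f i - P‖ + ‖A - P‖ :=
          norm_sub_le _ _
    _ ≤ 2 * δ := by
        rw [dist_eq_norm] at hA hAG; linarith
  rw [norm_mul] at h2δ
  have hAnorm : ‖P‖ / 2 ≤ ‖A‖ := by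
    rw [dist_eq_norm] at hA
    have h1 : ‖P‖ - ‖A‖ ≤ ‖P - A‖ := norm_sub_norm_le P A
    rw [norm_sub_rev P A] at h1
    have hδ2 : δ ≤ ‖P‖ / 2 := min_le_right _ _
    linarith
  have hδ1 : δ ≤ ε * ‖P‖ / 4 := min_le_left _ _
  nlinarith [norm_nonneg ((∏ i ∈ G, f i) - 1), norm_nonneg A]

lemma aux_summable_sq_sub_one {f : ℕ → ℂ} (hm : Multipliable f) (hP : ∏' i, f i ≠ 0) :
    Summable fun i => |‖f i‖ ^ 2 - 1| := by
  obtain ⟨F₀, hF₀⟩ := aux_tail_prod hm.hasProd hP (by norm_num : (0:ℝ) < 1/2)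
  -- bounds on individual factors outside F₀
  have hfi : ∀ i ∉ F₀, 1/2 ≤ ‖f i‖ ∧ ‖f i‖ ≤ 3/2 := by
    intro i hi
    have := hF₀ {i} (by simpa using hi)
    rw [Finset.prod_singleton] at this
    have h1 : ‖f i‖ - 1 ≤ ‖f i - 1‖ := by
      simpa using norm_sub_norm_le (f i) 1
    have h2 : 1 - ‖f i‖ ≤ ‖f i - 1‖ := by
      simpa [norm_sub_rev] using norm_sub_norm_le (1 : ℂ) (f i)
    constructor <;> linarith
  -- bounds on products over G disjoint from F₀
  have hGprod : ∀ G : Finset ℕ, Disjoint G F₀ → 1/2 ≤ ∏ i ∈ G, ‖f i‖ ∧ ∏ i ∈ G, ‖f i‖ ≤ 3/2 := by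
    intro G hG
    have := hF₀ G hG
    have hnp : ‖∏ i ∈ G, f i‖ = ∏ i ∈ G, ‖f i‖ := norm_prod _ _
    have h1 : ‖∏ i ∈ G, f i‖ - 1 ≤ ‖∏ i ∈ G, f i - 1‖ := by
      simpa using norm_sub_norm_le (∏ i ∈ G, f i) 1
    have h2 : 1 - ‖∏ i ∈ G, f i‖ ≤ ‖∏ i ∈ G, f i - 1‖ := by
      simpa [norm_sub_rev] using norm_sub_norm_le (1 : ℂ) (∏ i ∈ G, f i)
    rw [hnp] at h1 h2
    constructor <;> linarith
  set g : ℕ → ℝ := fun i => if i ∈ F₀ then 0 else Real.log ‖f i‖ with hgdef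
  have hgsum : Summable fun i => |g i| := by
    apply aux_summable_abs_of_bounded_sums (B := Real.log 2)
    intro G
    have h1 : ∑ i ∈ G, g i = ∑ i ∈ G \ F₀, g i := by
      refine (Finset.sum_subset Finset.sdiff_subset fun i hiG hi => ?_).symm
      have : i ∈ F₀ := by
        by_contra hc
        exact hi (Finset.mem_sdiff.mpr ⟨hiG, hc⟩)
      simp [hgdef, this]
    have h2 : ∑ i ∈ G \ F₀, g i = Real.log (∏ i ∈ G \ F₀, ‖f i‖) := by
      rw [Real.log_prod]
      · refine Finset.sum_congr rfl fun i hi => ?_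
        have hiF : i ∉ F₀ := (Finset.mem_sdiff.mp hi).2
        simp [hgdef, hiF]
      · intro i hi
        have := (hfi i (Finset.mem_sdiff.mp hi).2).1
        positivity
    obtain ⟨hlo, hhi⟩ := hGprod (G \ F₀) Finset.sdiff_disjoint
    rw [h1, h2]
    rw [abs_le]
    constructor
    · have : Real.log (1/2) ≤ Real.log (∏ i ∈ G \ F₀, ‖f i‖) :=
        Real.log_le_log (by norm_num) hlo
      rw [show (1:ℝ)/2 = 2⁻¹ by norm_num, Real.log_inv] at this
      linarith
    · calc Real.log (∏ i ∈ G \ F₀, ‖f i‖) ≤ Real.log (3/2) :=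
            Real.log_le_log (by linarith) hhi
      _ ≤ Real.log 2 := Real.log_le_log (by norm_num) (by norm_num)
  -- now compare |‖f i‖² - 1| with |g i| off F₀
  have hfin : (↑F₀ : Set ℕ).Finite := F₀.finite_toSet
  rw [← hfin.summable_compl_iff]
  refine Summable.of_nonneg_of_le (fun i => abs_nonneg _) (fun i => ?_)
    ((hgsum.mul_left 8).subtype ((↑F₀ : Set ℕ)ᶜ))
  show |‖f i.1‖ ^ 2 - 1| ≤ 8 * |g i.1|
  obtain ⟨i, hi⟩ := i
  have hiF : i ∉ F₀ := by simpa using hi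
  have hgi : g i = Real.log ‖f i‖ := by simp [hgdef, hiF]
  obtain ⟨hlo, hhi⟩ := hfi i hiF
  set t := Real.log ‖f i‖ with htdef
  have hfpos : (0:ℝ) < ‖f i‖ := by linarith
  have hexp : Real.exp t = ‖f i‖ := Real.exp_log hfpos
  have habs_t : |t| ≤ 1 := by
    rw [abs_le]
    constructor
    · have : Real.log (1/2) ≤ t := Real.log_le_log (by norm_num) hlo
      rw [show (1:ℝ)/2 = 2⁻¹ by norm_num, Real.log_inv] at this
      have h2 : Real.log 2 ≤ 1 := by
        rw [Real.log_le_iff_le_exp (by norm_num)]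
        have := Real.exp_one_gt_d9
        linarith
      linarith
    · calc t ≤ Real.log (3/2) := Real.log_le_log hfpos hhi
      _ ≤ Real.log 2 := Real.log_le_log (by norm_num) (by norm_num)
      _ ≤ 1 := by
          rw [Real.log_le_iff_le_exp (by norm_num)]
          have := Real.exp_one_gt_d9
          linarith
  have hkey : ‖f i‖ ^ 2 - 1 = (Real.exp t - 1) * (Real.exp t + 1) := by
    rw [hexp]; ring
  have h1 : |Real.exp t - 1| ≤ 2 * |t| := Real.abs_exp_sub_one_le habs_t
  have h2 : |Real.exp t + 1| ≤ 4 := by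
    rw [abs_le]
    have hle : Real.exp t ≤ Real.exp 1 := Real.exp_le_exp.mpr (abs_le.mp habs_t).2
    have := Real.exp_one_lt_d9
    have hpos := Real.exp_pos t
    constructor <;> linarith
  calc |‖f i‖ ^ 2 - 1| = |Real.exp t - 1| * |Real.exp t + 1| := by
        rw [hkey, abs_mul]
  _ ≤ (2 * |t|) * 4 := by
      apply mul_le_mul h1 h2 (abs_nonneg _) (by positivity)
  _ = 8 * |g i| := by rw [hgi]; ring

lemma aux_norm_sq_one_add (w : ℂ) : ‖1 + w‖ ^ 2 - 1 = 2 * w.re + ‖w‖ ^ 2 := by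
  have h1 : ‖1 + w‖ ^ 2 = Complex.normSq (1 + w) := by
    exact Complex.sq_norm _
  have h2 : ‖w‖ ^ 2 = Complex.normSq w := by
    exact Complex.sq_norm _
  rw [h1, h2, Complex.normSq_add]
  simp [Complex.normSq_one, Complex.conj_re]
  ring

lemma aux_summable_norm {ν : ℕ → ℂ} {t : ℝ} (ht : 0 < t)
    (h : ∀ z : ℂ, ‖z‖ = t → Multipliable (fun n => 1 + ν n * z) ∧
        (∏' n, (1 + ν n * z)) ≠ 0) :
    Summable fun n => ‖ν n‖ := by
  have key : ∀ z : ℂ, ‖z‖ = t → Summable fun n => |2 * (ν n * z).re + ‖ν n * z‖ ^ 2| := by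
    intro z hz
    obtain ⟨hm, hP⟩ := h z hz
    have := aux_summable_sq_sub_one hm hP
    refine this.congr fun n => ?_
    rw [aux_norm_sq_one_add]
  have hz1 : ‖(t : ℂ)‖ = t := by simp [abs_of_pos ht]
  have hz2 : ‖(-(t : ℂ))‖ = t := by simp [abs_of_pos ht]
  have hz3 : ‖(t : ℂ) * Complex.I‖ = t := by simp [abs_of_pos ht]
  have hz4 : ‖-((t : ℂ) * Complex.I)‖ = t := by simp [abs_of_pos ht]
  have s1 := key _ hz1
  have s2 := key _ hz2
  have s3 := key _ hz3
  have s4 := key _ hz4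
  -- real parts
  have hre : Summable fun n => |(ν n).re| := by
    have hs := s1.add s2
    have hcomp : ∀ n, (4 * t) * |(ν n).re| ≤
        |2 * (ν n * (t:ℂ)).re + ‖ν n * (t:ℂ)‖ ^ 2| +
        |2 * (ν n * (-(t:ℂ))).re + ‖ν n * (-(t:ℂ))‖ ^ 2| := by
      intro n
      have e1 : (ν n * (t:ℂ)).re = (ν n).re * t := by
        simp [Complex.mul_re, Complex.ofReal_re, Complex.ofReal_im]
      have e2 : (ν n * (-(t:ℂ))).re = -((ν n).re * t) := by
        simp [Complex.mul_re, Complex.ofReal_re, Complex.ofReal_im]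
      have e3 : ‖ν n * (-(t:ℂ))‖ = ‖ν n * (t:ℂ)‖ := by
        rw [norm_mul, norm_mul]
        simp [abs_of_pos ht]
      set A := 2 * (ν n * (t:ℂ)).re + ‖ν n * (t:ℂ)‖ ^ 2
      set B := 2 * (ν n * (-(t:ℂ))).re + ‖ν n * (-(t:ℂ))‖ ^ 2
      have hAB : A - B = 4 * t * (ν n).re := by
        simp only [A, B, e1, e2, e3]; ring
      calc (4 * t) * |(ν n).re| = |A - B| := by
            rw [hAB, abs_mul, abs_of_pos (by linarith : (0:ℝ) < 4 * t)]
      _ ≤ |A| + |B| := abs_sub _ _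
    have := Summable.of_nonneg_of_le (fun n => by positivity) hcomp hs
    have h4t : (0:ℝ) < 4 * t := by linarith
    refine (this.mul_left (4*t)⁻¹).congr fun n => ?_
    field_simp
  -- imaginary parts
  have him : Summable fun n => |(ν n).im| := by
    have hs := s4.add s3
    have hcomp : ∀ n, (4 * t) * |(ν n).im| ≤
        |2 * (ν n * (-((t:ℂ) * Complex.I))).re + ‖ν n * (-((t:ℂ) * Complex.I))‖ ^ 2| +
        |2 * (ν n * ((t:ℂ) * Complex.I)).re + ‖ν n * ((t:ℂ) * Complex.I)‖ ^ 2| := by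
      intro n
      have e1 : (ν n * ((t:ℂ) * Complex.I)).re = -((ν n).im * t) := by
        simp [Complex.mul_re, Complex.mul_im, Complex.ofReal_re, Complex.ofReal_im,
          Complex.I_re, Complex.I_im]
      have e2 : (ν n * (-((t:ℂ) * Complex.I))).re = (ν n).im * t := by
        simp [Complex.mul_re, Complex.mul_im, Complex.ofReal_re, Complex.ofReal_im,
          Complex.I_re, Complex.I_im]
      have e3 : ‖ν n * (-((t:ℂ) * Complex.I))‖ = ‖ν n * ((t:ℂ) * Complex.I)‖ := by
        rw [norm_mul, norm_mul, norm_neg]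
      set A := 2 * (ν n * (-((t:ℂ) * Complex.I))).re + ‖ν n * (-((t:ℂ) * Complex.I))‖ ^ 2
      set B := 2 * (ν n * ((t:ℂ) * Complex.I)).re + ‖ν n * ((t:ℂ) * Complex.I)‖ ^ 2
      have hAB : A - B = 4 * t * (ν n).im := by
        simp only [A, B, e1, e2, e3]; ring
      calc (4 * t) * |(ν n).im| = |A - B| := by
            rw [hAB, abs_mul, abs_of_pos (by linarith : (0:ℝ) < 4 * t)]
      _ ≤ |A| + |B| := abs_sub _ _
    have := Summable.of_nonneg_of_le (fun n => by positivity) hcomp hs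
    refine (this.mul_left (4*t)⁻¹).congr fun n => ?_
    field_simp
  refine Summable.of_nonneg_of_le (fun n => norm_nonneg _)
    (fun n => ?_) (hre.add him)
  exact Complex.norm_le_abs_re_add_abs_im (ν n)

lemma aux_entire {ν a : ℕ → ℂ}
    (hrep : ∀ z : ℂ, HasSum (fun n => a n * z ^ n) (∏' n, (1 + ν n * z))) :
    ∃ P : FormalMultilinearSeries ℂ ℂ ℂ, (∀ n, ‖P n‖ = ‖a n‖) ∧
      HasFPowerSeriesOnBall (fun z => ∏' n, (1 + ν n * z)) P 0 ⊤ := by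
  set f : ℂ → ℂ := fun z => ∏' n, (1 + ν n * z) with hfdef
  -- power series
  set P : FormalMultilinearSeries ℂ ℂ ℂ := FormalMultilinearSeries.ofScalars ℂ a with hPdef
  have hPn : ∀ n, ‖P n‖ = ‖a n‖ := fun n => FormalMultilinearSeries.ofScalars_norm ℂ a n
  have hrad : P.radius = ⊤ := by
    apply P.radius_eq_top_of_summable_norm
    intro r
    have hsummable : Summable fun n => a n * ((r:ℝ):ℂ) ^ n := (hrep _).summable
    have := summable_norm_iff.mpr hsummable
    refine this.congr fun n => ?_
    rw [norm_mul, norm_pow, Complex.norm_real, Real.norm_eq_abs, NNReal.abs_eq, hPn]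
  have hball : HasFPowerSeriesOnBall f P 0 ⊤ := by
    refine ⟨by rw [hrad], by simp, ?_⟩
    intro y _
    rw [zero_add]
    have h := hrep y
    simpa only [hPdef, FormalMultilinearSeries.ofScalars_apply_eq, smul_eq_mul] using h
  exact ⟨P, hPn, hball⟩

lemma coeff_bound_master {q s : ℝ} (hs0 : 0 < s) (hs1 : s ≤ 1) (hsq : s < q)
    {ν a : ℕ → ℂ} (hsum : Summable fun n => ‖ν n‖ ^ s)
    (hmul : ∀ z : ℂ, Multipliable fun n => 1 + ν n * z)
    (hrep : ∀ z : ℂ, HasSum (fun n => a n * z ^ n) (∏' n, (1 + ν n * z))) :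
    ∃ N : ℕ, ∀ n : ℕ, N ≤ n → ‖a n‖ ≤ (n : ℝ) ^ (-(n : ℝ) / q) := by
  set f : ℂ → ℂ := fun z => ∏' n, (1 + ν n * z) with hfdef
  set C : ℝ := 1/s + Real.log 2 with hCdef
  have hC0 : 0 < C := by
    have : (0:ℝ) < 1/s := by positivity
    have := Real.log_nonneg (by norm_num : (1:ℝ) ≤ 2)
    rw [hCdef]; linarith
  set T : ℝ := ∑' n, ‖ν n‖ ^ s with hTdef
  have hT0 : 0 ≤ T := tsum_nonneg fun n => by positivity
  set B : ℝ := C * T with hBdef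
  have hB0 : 0 ≤ B := by positivity
  -- growth bound
  have hbound : ∀ z : ℂ, ‖f z‖ ≤ Real.exp (B * ‖z‖ ^ s) := by
    intro z
    have hp : Tendsto (fun F : Finset ℕ => ∏ i ∈ F, (1 + ν i * z)) atTop (𝓝 (f z)) :=
      (hmul z).hasProd
    have hpn : Tendsto (fun F : Finset ℕ => ‖∏ i ∈ F, (1 + ν i * z)‖) atTop (𝓝 ‖f z‖) :=
      hp.norm
    refine le_of_tendsto' hpn fun F => ?_
    rw [norm_prod]
    calc ∏ i ∈ F, ‖1 + ν i * z‖
        ≤ ∏ i ∈ F, Real.exp (C * (‖ν i‖ ^ s * ‖z‖ ^ s)) := by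
          apply Finset.prod_le_prod (fun i _ => norm_nonneg _)
          intro i _
          have h1 : ‖1 + ν i * z‖ ≤ 1 + ‖ν i * z‖ := by
            calc ‖1 + ν i * z‖ ≤ ‖(1:ℂ)‖ + ‖ν i * z‖ := norm_add_le _ _
            _ = 1 + ‖ν i * z‖ := by rw [norm_one]
          have h2 : Real.log (1 + ‖ν i * z‖) ≤ C * ‖ν i * z‖ ^ s :=
            aux_log_one_add_le hs0 hs1 (norm_nonneg _)
          have h3 : 1 + ‖ν i * z‖ ≤ Real.exp (C * ‖ν i * z‖ ^ s) := by
            rw [← Real.exp_log (by positivity : (0:ℝ) < 1 + ‖ν i * z‖)]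
            exact Real.exp_le_exp.mpr h2
          have h4 : ‖ν i * z‖ ^ s = ‖ν i‖ ^ s * ‖z‖ ^ s := by
            rw [norm_mul, Real.mul_rpow (norm_nonneg _) (norm_nonneg _)]
          rw [← h4]
          exact h1.trans h3
    _ = Real.exp (∑ i ∈ F, C * (‖ν i‖ ^ s * ‖z‖ ^ s)) := (Real.exp_sum F _).symm
    _ ≤ Real.exp (B * ‖z‖ ^ s) := by
        rw [Real.exp_le_exp]
        have : ∑ i ∈ F, C * (‖ν i‖ ^ s * ‖z‖ ^ s)
            = (C * ‖z‖ ^ s) * ∑ i ∈ F, ‖ν i‖ ^ s := by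
          rw [Finset.mul_sum]
          exact Finset.sum_congr rfl fun i _ => by ring
        rw [this, hBdef]
        have hle : ∑ i ∈ F, ‖ν i‖ ^ s ≤ T := hsum.sum_le_tsum F (fun i _ => by positivity)
        calc (C * ‖z‖ ^ s) * ∑ i ∈ F, ‖ν i‖ ^ s ≤ (C * ‖z‖ ^ s) * T := by
              apply mul_le_mul_of_nonneg_left hle (by positivity)
        _ = C * T * ‖z‖ ^ s := by ring
  obtain ⟨P, hPn, hball⟩ := aux_entire hrep
  rw [← hfdef] at hball
  have hdiff : Differentiable ℂ f := fun x =>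
    (hball.analyticAt_of_mem (by simp)).differentiableAt
  -- Cauchy estimates
  have hcau : ∀ r : ℝ≥0, 0 < r → ∀ n : ℕ,
      ‖a n‖ ≤ Real.exp (B * (r:ℝ) ^ s) * ((r:ℝ)⁻¹) ^ n := by
    intro r hr n
    have hc : HasFPowerSeriesOnBall f (cauchyPowerSeries f 0 (r:ℝ)) 0 ⊤ :=
      hdiff.hasFPowerSeriesOnBall 0 hr
    have heq : P = cauchyPowerSeries f 0 (r:ℝ) :=
      hball.hasFPowerSeriesAt.eq_formalMultilinearSeries hc.hasFPowerSeriesAt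
    have h1 : ‖a n‖ = ‖cauchyPowerSeries f 0 (r:ℝ) n‖ := by rw [← heq, hPn]
    have h2 := norm_cauchyPowerSeries_le f 0 (r:ℝ) n
    set M : ℝ := Real.exp (B * (r:ℝ) ^ s) with hMdef
    have hM0 : 0 < M := Real.exp_pos _
    have hint : (∫ θ : ℝ in (0)..2 * Real.pi, ‖f (circleMap 0 (r:ℝ) θ)‖)
        ≤ 2 * Real.pi * M := by
      have hmono := intervalIntegral.integral_mono_on
        (f := fun θ : ℝ => ‖f (circleMap 0 (r:ℝ) θ)‖) (g := fun _ : ℝ => M)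
        (μ := MeasureTheory.volume) Real.two_pi_pos.le
        (((hdiff.continuous.comp (continuous_circleMap 0 (r:ℝ))).norm).intervalIntegrable 0 (2*Real.pi))
        (intervalIntegrable_const)
        (fun θ _ => by
          have := hbound (circleMap 0 (r:ℝ) θ)
          have habs : ‖circleMap 0 (r:ℝ) θ‖ = (r:ℝ) := by
            rw [norm_circleMap_zero, NNReal.abs_eq]
          rw [habs] at this
          exact this)
      calc (∫ θ : ℝ in (0)..2 * Real.pi, ‖f (circleMap 0 (r:ℝ) θ)‖)
          ≤ ∫ _ : ℝ in (0)..2 * Real.pi, M := hmono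
      _ = 2 * Real.pi * M := by
          rw [intervalIntegral.integral_const, smul_eq_mul]; ring
    rw [h1]
    calc ‖cauchyPowerSeries f 0 (r:ℝ) n‖
        ≤ ((2 * Real.pi)⁻¹ * ∫ θ : ℝ in (0)..2 * Real.pi,
            ‖f (circleMap 0 (r:ℝ) θ)‖) * |(r:ℝ)|⁻¹ ^ n := h2
    _ ≤ ((2 * Real.pi)⁻¹ * (2 * Real.pi * M)) * |(r:ℝ)|⁻¹ ^ n := by
        apply mul_le_mul_of_nonneg_right _ (by positivity)
        exact mul_le_mul_of_nonneg_left hint (by positivity)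
    _ = M * ((r:ℝ)⁻¹) ^ n := by
        rw [NNReal.abs_eq]
        field_simp
  -- asymptotics
  set t : ℝ := (s + q) / 2 with htdef
  have hst : s < t := by rw [htdef]; linarith
  have htq : t < q := by rw [htdef]; linarith
  have ht0 : 0 < t := lt_trans hs0 hst
  have hq0 : 0 < q := lt_trans ht0 htq
  set c : ℝ := 1/t - 1/q with hcdef
  have hc0 : 0 < c := by
    rw [hcdef, sub_pos]
    exact one_div_lt_one_div_of_lt ht0 htq
  have hev1 : ∀ᶠ n : ℕ in atTop, B * (n:ℝ) ^ (s/t - 1) < c := by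
    have hexp : (0:ℝ) < 1 - s/t := by
      have : s/t < 1 := (div_lt_one ht0).mpr hst
      linarith
    have h1 : Tendsto (fun x : ℝ => x ^ (-(1 - s/t))) atTop (𝓝 0) :=
      tendsto_rpow_neg_atTop hexp
    have h2 : Tendsto (fun n : ℕ => ((n:ℝ)) ^ (-(1 - s/t))) atTop (𝓝 0) :=
      h1.comp tendsto_natCast_atTop_atTop
    have h3 : Tendsto (fun n : ℕ => B * ((n:ℝ)) ^ (-(1 - s/t))) atTop (𝓝 0) := by
      simpa using h2.const_mul B
    have h4 : Tendsto (fun n : ℕ => B * ((n:ℝ)) ^ (s/t - 1)) atTop (𝓝 0) := by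
      refine h3.congr fun n => ?_
      norm_num
    exact h4.eventually_lt_const hc0
  have hev2 : ∀ᶠ n : ℕ in atTop, 3 ≤ n := eventually_ge_atTop 3
  obtain ⟨N, hN⟩ := eventually_atTop.mp (hev1.and hev2)
  refine ⟨N, fun n hn => ?_⟩
  obtain ⟨hev1n, hev2n⟩ := hN n hn
  have hx3 : (3:ℝ) ≤ (n:ℝ) := by exact_mod_cast hev2n
  have hx0 : (0:ℝ) < (n:ℝ) := by linarith
  set x : ℝ := (n:ℝ) with hxdef
  set r : ℝ := x ^ (1/t) with hrdef
  have hr0 : 0 < r := Real.rpow_pos_of_pos hx0 _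
  have hrnn : (0:ℝ) ≤ r := hr0.le
  have key := hcau ⟨r, hrnn⟩ (by exact_mod_cast hr0) n
  change ‖a n‖ ≤ Real.exp (B * r ^ s) * (r⁻¹) ^ n at key
  have hrs : r ^ s = x ^ (s/t) := by
    rw [hrdef, ← Real.rpow_mul hx0.le]
    rw [show 1/t * s = s/t by ring]
  have hrn : (r⁻¹) ^ n = x ^ (-(n:ℝ)/t) := by
    have h1 : r⁻¹ = x ^ (-(1/t)) := by
      rw [hrdef, Real.rpow_neg hx0.le]
    rw [h1, ← Real.rpow_natCast (x ^ (-(1/t))) n, ← Real.rpow_mul hx0.le]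
    rw [show -(1/t) * (n:ℝ) = -(n:ℝ)/t by ring]
  rw [hrs, hrn] at key
  have hlog1 : 1 ≤ Real.log x := by
    rw [Real.le_log_iff_exp_le hx0]
    have := Real.exp_one_lt_d9
    linarith
  have h5 : B * x ^ (s/t) ≤ (x * c) * Real.log x := by
    have e : x ^ (s/t) = x ^ (s/t - 1) * x := by
      rw [← Real.rpow_add_one hx0.ne' (s/t - 1)]
      norm_num
    have h6 : B * x ^ (s/t) ≤ c * x := by
      rw [e, ← mul_assoc]
      exact mul_le_mul_of_nonneg_right hev1n.le hx0.le
    have h7 : c * x ≤ (x * c) * Real.log x := by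
      have h9 : (x * c) * 1 ≤ (x * c) * Real.log x :=
        mul_le_mul_of_nonneg_left hlog1 (by positivity)
      linarith
    exact h6.trans h7
  have h8 : Real.exp (B * x ^ (s/t)) ≤ x ^ (x * c) := by
    have hdef : x ^ (x * c) = Real.exp ((x * c) * Real.log x) := by
      rw [Real.rpow_def_of_pos hx0 (x * c)]; ring_nf
    rw [hdef]
    exact Real.exp_le_exp.mpr h5
  calc ‖a n‖ ≤ Real.exp (B * x ^ (s/t)) * x ^ (-(n:ℝ)/t) := key
  _ ≤ x ^ (x * c) * x ^ (-(n:ℝ)/t) := by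
      exact mul_le_mul_of_nonneg_right h8 (Real.rpow_nonneg hx0.le _)
  _ = x ^ (x * c + (-(n:ℝ)/t)) := (Real.rpow_add hx0 _ _).symm
  _ = x ^ (-(n:ℝ)/q) := by
      congr 1
      rw [hcdef, hxdef]
      field_simp
      ring

/-- If `(ν_n) ∈ ℓ^p` and the entire function `∏_n (1 + ν_n z)` is represented on all of `ℂ`
by the power series `∑_n a_n zⁿ`, then for every `q > p` one has `|a_n| ≤ n^{-n/q}` for all
sufficiently large `n`. -/
theorem coeff_bound_of_lp_product (p : ℝ) (hp : 0 < p) (ν a : ℕ → ℂ)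
    (hν : Summable fun n => ‖ν n‖ ^ p)
    (hmul : ∀ z : ℂ, Multipliable fun n => 1 + ν n * z)
    (hrep : ∀ z : ℂ, HasSum (fun n => a n * z ^ n) (∏' n, (1 + ν n * z))) :
    ∀ q : ℝ, p < q → ∃ N : ℕ, ∀ n : ℕ, N ≤ n →
      ‖a n‖ ≤ (n : ℝ) ^ (-(n : ℝ) / q) := by
  intro q hq
  rcases le_or_gt q 1 with hq1 | hq1
  · -- use the ℓ^s bound with s = (p+q)/2
    set s : ℝ := (p + q) / 2 with hsdef
    have hs0 : 0 < s := by rw [hsdef]; linarith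
    have hps : p < s := by rw [hsdef]; linarith
    have hsq : s < q := by rw [hsdef]; linarith
    have hs1 : s ≤ 1 := by linarith
    have hsmall : ∀ᶠ n in Filter.cofinite, ‖ν n‖ ≤ 1 := by
      have h0 : Filter.Tendsto (fun n => ‖ν n‖ ^ p) Filter.cofinite (𝓝 0) :=
        hν.tendsto_cofinite_zero
      filter_upwards [h0.eventually_lt_const one_pos] with n hn
      by_contra hc
      push_neg at hc
      have : (1:ℝ) ≤ ‖ν n‖ ^ p := Real.one_le_rpow hc.le hp.le
      linarith
    have hsum : Summable fun n => ‖ν n‖ ^ s := by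
      refine summable_of_isBigO hν (Asymptotics.isBigO_iff.mpr ⟨1, ?_⟩)
      filter_upwards [hsmall] with n hn
      rw [one_mul, Real.norm_eq_abs, Real.norm_eq_abs,
        abs_of_nonneg (by positivity), abs_of_nonneg (by positivity)]
      rcases eq_or_lt_of_le (norm_nonneg (ν n)) with h0 | h0
      · rw [← h0, Real.zero_rpow hs0.ne', Real.zero_rpow hp.ne']
      · exact Real.rpow_le_rpow_of_exponent_ge h0 hn hps.le
    exact coeff_bound_master hs0 hs1 hsq hsum hmul hrep
  · -- derive ℓ¹ summability from unconditional convergence of the products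
    obtain ⟨P, hPn, hball⟩ := aux_entire hrep
    set f : ℂ → ℂ := fun z => ∏' n, (1 + ν n * z) with hfdef
    have hcont : ContinuousAt f 0 := (hball.analyticAt_of_mem (by simp)).continuousAt
    have hf0 : f 0 = 1 := by
      rw [hfdef]
      simp only [mul_zero, add_zero]
      exact tprod_one
    have hev : ∀ᶠ z in 𝓝 (0:ℂ), ‖f z - 1‖ < 1 := by
      have h1 : Filter.Tendsto f (𝓝 0) (𝓝 1) := by
        rw [← hf0]; exact hcont
      have h2 : Filter.Tendsto (fun z => ‖f z - 1‖) (𝓝 (0:ℂ)) (𝓝 ‖(1:ℂ) - 1‖) :=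
        ((h1.sub_const 1).norm)
      simp only [sub_self, norm_zero] at h2
      exact h2.eventually_lt_const one_pos
    obtain ⟨ε, hε, hball'⟩ := Metric.eventually_nhds_iff.mp hev
    set t : ℝ := ε / 2 with htdef
    have ht : 0 < t := by rw [htdef]; linarith
    have hl1 : Summable fun n => ‖ν n‖ := by
      refine aux_summable_norm ht fun z hz => ⟨hmul z, ?_⟩
      have hdist : dist z 0 < ε := by
        rw [dist_zero_right, hz, htdef]; linarith
      have := hball' hdist
      intro hzero
      rw [show (∏' n, (1 + ν n * z)) = f z from rfl] at hzero
      rw [hzero] at this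
      simp at this
    have hsum : Summable fun n => ‖ν n‖ ^ (1:ℝ) :=
      hl1.congr fun n => (Real.rpow_one _).symm
    exact coeff_bound_master one_pos le_rfl hq1 hsum hmul hrep
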